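/- arXiv:2605.31019 — 2 statements merged into one kernel-verified Lean document; each statement's English description precedes it below -/
import Mathlib

section
/- Modulo the ideal I_μ (the annihilator of all Φ_{μ,q}, q ∈ ℕ), one has the identities (U_1 + μσ_1)U_{−1} ≡ U_0(U_0 + kμ − 1) and U_{−1}(U_1 + μσ_1) ≡ (U_0 + kμ)(U_0 + 1). In particular both sides agree when applied to every polynomial Φ_{μ,q}. -/
open MvPolynomial Finset

noncomputable section

/-- Polynomials in the variables `σ_1, …, σ_k` (we use `ℕ`-indexed variables,
the variable `X h` playing the role of `σ_h`). -/
abbrev WPoly : Type := MvPolynomial ℕ ℂ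

/-- The partial derivative `∂_h = ∂/∂σ_h` as a linear endomorphism. -/
def Dop (h : ℕ) : Module.End ℂ WPoly := (MvPolynomial.pderiv h).toLinearMap

/-- Multiplication by a polynomial as a linear endomorphism. -/
def Mop (p : WPoly) : Module.End ℂ WPoly := LinearMap.mulLeft ℂ p

/-- `σ_h`, with the conventions `σ_0 = 1` and `σ_h = 0` for `h > k`. -/
def sig (k h : ℕ) : WPoly := if h = 0 then 1 else if h ≤ k then X h else 0

/-- The Euler operator `E := Σ_{h=1}^k σ_h ∂_h`. -/
def Eop (k : ℕ) : Module.End ℂ WPoly := ∑ h ∈ Icc 1 k, Mop (X h) * Dop h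

/-- `U_0 := Σ_{h=1}^k h σ_h ∂_h`. -/
def U0op (k : ℕ) : Module.End ℂ WPoly := ∑ h ∈ Icc 1 k, (h : ℂ) • (Mop (X h) * Dop h)

/-- `U_{-1} := Σ_{h=0}^{k-1} (k-h) σ_h ∂_{h+1}` (with `σ_0 = 1`). -/
def Um1op (k : ℕ) : Module.End ℂ WPoly :=
  ∑ h ∈ range k, ((k - h : ℕ) : ℂ) • (Mop (sig k h) * Dop (h + 1))

/-- `U_1 := Σ_{h=1}^k (σ_1 σ_h - (h+1) σ_{h+1}) ∂_h` (with `σ_{k+1} = 0`). -/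
def U1op (k : ℕ) : Module.End ℂ WPoly :=
  ∑ h ∈ Icc 1 k, Mop (X 1 * X h - ((h + 1 : ℕ) : ℂ) • sig k (h + 1)) * Dop h

/-- `T^m_μ := ∂_1 ∂_{m-1} + ∂_m (E + μ)`. -/
def Tmu (k : ℕ) (μ : ℂ) (m : ℕ) : Module.End ℂ WPoly :=
  Dop 1 * Dop (m - 1) + Dop m * (Eop k + μ • (1 : Module.End ℂ WPoly))

/-- `A_{p,q} := ∂_p ∂_q - ∂_{p+1} ∂_{q-1}`. -/
def Aop (p q : ℕ) : Module.End ℂ WPoly := Dop p * Dop q - Dop (p + 1) * Dop (q - 1)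

/-- The weight `w(α) := Σ_j j·α_j` of an exponent. -/
def wt (α : ℕ →₀ ℕ) : ℕ := ∑ j ∈ α.support, j * α j

/-- The weight-`r` homogeneous part of a polynomial (`σ_h` has weight `h`). -/
def weightPart (r : ℕ) (p : WPoly) : WPoly :=
  ∑ α ∈ p.support.filter (fun α => wt α = r), monomial α (coeff α p)

/-- `m̃_{q,r}(σ) := q! Σ_{|α| = q, w(α) = r} σ^α / α!`. -/
def mtilde (k q r : ℕ) : WPoly :=
  (q.factorial : ℂ) •
    ∑ α ∈ (Finset.Nat.antidiagonalTuple k q).filter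
        (fun α => ∑ j : Fin k, ((j : ℕ) + 1) * α j = r),
      (((∏ j : Fin k, Nat.factorial (α j)) : ℕ) : ℂ)⁻¹ • ∏ j : Fin k, X ((j : ℕ) + 1) ^ α j

/-- `x := Σ_{h=1}^k (-1)^h σ_h`. -/
def xpoly (k : ℕ) : WPoly := ∑ h ∈ Icc 1 k, C ((-1 : ℂ) ^ h) * X h

/-- `Γ_{μ,p} := (-1)^p μ(μ+1)⋯(μ+p-1)/p!`, the coefficient of `x^p` in `(1+x)^{-μ}`. -/
def GammaC (μ : ℂ) (p : ℕ) : ℂ := (-1 : ℂ) ^ p * (∏ i ∈ range p, (μ + i)) / (p.factorial : ℂ)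

/-- `Φ_{μ,q}` : the weight-`q` part of the Taylor expansion at `σ = 0` of
`(1 + Σ_{h=1}^k (-1)^h σ_h)^{-μ}`.  Since the weight-`q` part of `x^p` vanishes for
`p > q`, it suffices to truncate the series at order `q`. -/
def Phi (k : ℕ) (μ : ℂ) (q : ℕ) : WPoly :=
  weightPart q (∑ p ∈ range (q + 1), GammaC μ p • xpoly k ^ p)

/-- `P_σ(a) := a^k + Σ_{h=1}^k (-1)^h σ_h a^{k-h}` as a polynomial in `σ` (with `a ∈ ℂ` fixed). -/
def Ppol (k : ℕ) (a : ℂ) : WPoly :=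
  C (a ^ k) + ∑ h ∈ Icc 1 k, C ((-1 : ℂ) ^ h * a ^ (k - h)) * X h

/-- `P'_σ(a) = ∂P_σ(a)/∂a` as a polynomial in `σ`. -/
def PpolDeriv (k : ℕ) (a : ℂ) : WPoly :=
  C ((k : ℂ) * a ^ (k - 1)) +
    ∑ h ∈ Icc 1 k, C ((-1 : ℂ) ^ h * ((k - h : ℕ) : ℂ) * a ^ (k - h - 1)) * X h



/-! ### Auxiliary development -/

section Aux

/-- Total degree restricted to variables `1,…,k`. -/
def SZ (k : ℕ) (α : ℕ →₀ ℕ) : ℕ := ∑ j ∈ Icc 1 k, α j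

/-- Rising factorial product `μ(μ+1)⋯(μ+n-1)`. -/
def pk (μ : ℂ) (n : ℕ) : ℂ := ∏ i ∈ range n, (μ + i)

/-- Product of factorials of exponents. -/
def fct (k : ℕ) (α : ℕ →₀ ℕ) : ℂ := ∏ j ∈ Icc 1 k, ((α j).factorial : ℂ)

/-- Closed form coefficient of `Φ_{μ,q}`. -/
def cph (k : ℕ) (μ : ℂ) (q : ℕ) (α : ℕ →₀ ℕ) : ℂ :=
  if α.support ⊆ Icc 1 k ∧ wt α = q then
    (-1 : ℂ) ^ (q + SZ k α) * pk μ (SZ k α) / fct k α else 0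

lemma cph_pos {k q : ℕ} (μ : ℂ) {α : ℕ →₀ ℕ} (h : α.support ⊆ Icc 1 k ∧ wt α = q) :
    cph k μ q α = (-1 : ℂ) ^ (q + SZ k α) * pk μ (SZ k α) / fct k α := by
  unfold cph; exact if_pos h

lemma cph_neg {k q : ℕ} (μ : ℂ) {α : ℕ →₀ ℕ} (h : ¬(α.support ⊆ Icc 1 k ∧ wt α = q)) :
    cph k μ q α = 0 := by
  unfold cph; exact if_neg h

lemma fct_ne_zero (k : ℕ) (α : ℕ →₀ ℕ) : fct k α ≠ 0 :=
  Finset.prod_ne_zero_iff.2 fun _ _ => Nat.cast_ne_zero.2 (Nat.factorial_ne_zero _)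

lemma pk_succ (μ : ℂ) (n : ℕ) : pk μ (n + 1) = pk μ n * (μ + n) := Finset.prod_range_succ _ _

lemma wt_eq_sum (α : ℕ →₀ ℕ) : wt α = α.sum fun j n => j * n := rfl

lemma wt_add_single (α : ℕ →₀ ℕ) (j : ℕ) : wt (α + Finsupp.single j 1) = wt α + j := by
  rw [wt_eq_sum, wt_eq_sum, Finsupp.sum_add_index' (fun a => mul_zero a) (fun a b c => mul_add a b c),
    Finsupp.sum_single_index (mul_zero j), mul_one]

lemma sub_add_single {α : ℕ →₀ ℕ} {j : ℕ} (h : α j ≠ 0) :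
    (α - Finsupp.single j 1) + Finsupp.single j 1 = α := by
  ext i
  rcases eq_or_ne i j with rfl | hij
  · simp only [Finsupp.add_apply, Finsupp.tsub_apply, Finsupp.single_eq_same]
    omega
  · simp [Finsupp.tsub_apply, Finsupp.single_eq_of_ne' (Ne.symm hij)]

lemma add_single_apply_self (α : ℕ →₀ ℕ) (j : ℕ) :
    (α + Finsupp.single j 1 : ℕ →₀ ℕ) j = α j + 1 := by
  simp

lemma add_single_apply_ne (α : ℕ →₀ ℕ) {i j : ℕ} (h : i ≠ j) :
    (α + Finsupp.single j 1 : ℕ →₀ ℕ) i = α i := by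
  simp [Finsupp.single_eq_of_ne' (Ne.symm h)]

lemma SZ_add_single (k : ℕ) (α : ℕ →₀ ℕ) {j : ℕ} (hj : j ∈ Icc 1 k) :
    SZ k (α + Finsupp.single j 1) = SZ k α + 1 := by
  unfold SZ
  simp only [Finsupp.add_apply, Finset.sum_add_distrib]
  congr 1
  simp_rw [Finsupp.single_apply]
  rw [Finset.sum_ite_eq (Icc 1 k) j (fun _ => 1), if_pos hj]

lemma fct_add_single (k : ℕ) (α : ℕ →₀ ℕ) {j : ℕ} (hj : j ∈ Icc 1 k) :
    fct k (α + Finsupp.single j 1) = ((α j : ℂ) + 1) * fct k α := by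
  unfold fct
  rw [← Finset.mul_prod_erase _ _ hj, ← Finset.mul_prod_erase _ (fun i => ((α i).factorial : ℂ)) hj]
  rw [Finset.prod_congr rfl (fun i hi => by rw [add_single_apply_ne α (Finset.ne_of_mem_erase hi)])]
  rw [add_single_apply_self, Nat.factorial_succ]
  push_cast
  ring

lemma supp_add_single {k : ℕ} {α : ℕ →₀ ℕ} {j : ℕ} (hj : j ∈ Icc 1 k)
    (hs : α.support ⊆ Icc 1 k) : (α + Finsupp.single j 1).support ⊆ Icc 1 k := by
  intro i hi
  rcases eq_or_ne i j with rfl | hij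
  · exact hj
  · apply hs
    rw [Finsupp.mem_support_iff] at hi ⊢
    rwa [add_single_apply_ne α hij] at hi

lemma mem_supp_add_single {α : ℕ →₀ ℕ} {i j : ℕ} (hi : α i ≠ 0) :
    i ∈ (α + Finsupp.single j 1).support := by
  rw [Finsupp.mem_support_iff, Finsupp.add_apply]
  exact fun h => hi (Nat.eq_zero_of_add_eq_zero_right h)

lemma supp_sub_single (α : ℕ →₀ ℕ) (j : ℕ) :
    (α - Finsupp.single j 1).support ⊆ α.support := by
  intro i hi
  rw [Finsupp.mem_support_iff] at hi ⊢
  rw [Finsupp.tsub_apply] at hi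
  omega

lemma wt_eq_WT {k : ℕ} {α : ℕ →₀ ℕ} (hs : α.support ⊆ Icc 1 k) :
    wt α = ∑ j ∈ Icc 1 k, j * α j := by
  unfold wt
  exact Finset.sum_subset hs (fun x _ hx => by
    rw [Finsupp.notMem_support_iff.1 hx, mul_zero])

lemma SZ_le_wt {k : ℕ} {α : ℕ →₀ ℕ} (hs : α.support ⊆ Icc 1 k) : SZ k α ≤ wt α := by
  rw [wt_eq_WT hs]
  unfold SZ
  refine Finset.sum_le_sum fun j hj => ?_
  have h1 : 1 ≤ j := (mem_Icc.1 hj).1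
  calc α j = 1 * α j := (one_mul _).symm
  _ ≤ j * α j := Nat.mul_le_mul_right _ h1

/-! #### coefficient extraction lemmas -/

lemma coeff_pderiv (h : ℕ) (p : WPoly) (α : ℕ →₀ ℕ) :
    coeff α (pderiv h p) = ((α h : ℂ) + 1) * coeff (α + Finsupp.single h 1) p := by
  induction p using MvPolynomial.induction_on' with
  | add p q hp hq =>
    rw [map_add, coeff_add, coeff_add, hp, hq, mul_add]
  | monomial s a =>
    rw [pderiv_monomial, coeff_monomial, coeff_monomial]
    by_cases hs : s = α + Finsupp.single h 1
    · subst hs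
      have hc : (α + Finsupp.single h 1) - Finsupp.single h 1 = α := by
        ext i
        rcases eq_or_ne i h with rfl | hih
        · simp only [Finsupp.tsub_apply, Finsupp.add_apply, Finsupp.single_eq_same]; omega
        · simp [Finsupp.tsub_apply, Finsupp.single_eq_of_ne' (Ne.symm hih)]
      rw [if_pos hc, if_pos rfl, add_single_apply_self]
      push_cast
      ring
    · rw [if_neg hs, mul_zero]
      by_cases h0 : s h = 0
      · have hss : s - Finsupp.single h 1 = s := by
          ext i
          rcases eq_or_ne i h with rfl | hih
          · simp only [Finsupp.tsub_apply, Finsupp.single_eq_same]; omega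
          · simp [Finsupp.tsub_apply, Finsupp.single_eq_of_ne' (Ne.symm hih)]
        rw [hss]
        split_ifs with h1
        · rw [h0]; simp
        · rfl
      · rw [if_neg]
        intro heq
        exact hs (by rw [← heq]; exact (sub_add_single h0).symm)

lemma coeff_X_mul_pderiv_self (h : ℕ) (p : WPoly) (α : ℕ →₀ ℕ) :
    coeff α (X h * pderiv h p) = (α h : ℂ) * coeff α p := by
  rw [coeff_X_mul']
  by_cases h0 : α h = 0
  · rw [if_neg (by simp [Finsupp.mem_support_iff, h0]), h0]
    simp
  · rw [if_pos (Finsupp.mem_support_iff.2 h0), coeff_pderiv, sub_add_single h0]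
    congr 1
    rw [Finsupp.tsub_apply, Finsupp.single_eq_same, Nat.cast_sub (by omega)]
    push_cast
    ring

lemma coeff_weightPart (r : ℕ) (p : WPoly) (β : ℕ →₀ ℕ) :
    coeff β (weightPart r p) = if wt β = r then coeff β p else 0 := by
  unfold weightPart
  rw [coeff_sum]
  simp_rw [coeff_monomial]
  rw [Finset.sum_ite_eq' _ β (fun α => coeff α p)]
  by_cases hwt : wt β = r
  · rw [if_pos hwt]
    by_cases hb : β ∈ p.support
    · rw [if_pos (Finset.mem_filter.2 ⟨hb, hwt⟩)]
    · rw [if_neg (fun hmem => hb (Finset.mem_filter.1 hmem).1)]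
      exact (MvPolynomial.notMem_support_iff.1 hb).symm
  · rw [if_neg hwt]
    split_ifs with hm
    · exact absurd (Finset.mem_filter.1 hm).2 hwt
    · rfl

lemma prod_X_pow (s : Finset ℕ) (g : ℕ → ℕ) :
    (∏ i ∈ s, (X i ^ g i : WPoly)) = monomial (∑ i ∈ s, Finsupp.single i (g i)) 1 := by
  induction s using Finset.induction_on with
  | empty => simp
  | insert _ _ ha ih =>
    rw [Finset.prod_insert ha, Finset.sum_insert ha, ih, X_pow_eq_monomial,
      monomial_mul, one_mul]

lemma Gsum_apply (k : ℕ) (g : ℕ → ℕ) (j : ℕ) :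
    (∑ i ∈ Icc 1 k, Finsupp.single i (g i)) j = if j ∈ Icc 1 k then g j else 0 := by
  rw [Finset.sum_apply']
  simp_rw [Finsupp.single_apply]
  exact Finset.sum_ite_eq' _ _ _

lemma g_eq (k : ℕ) {g : ℕ → ℕ} (hg : ∀ i, g i ≠ 0 → i ∈ Icc 1 k) {α : ℕ →₀ ℕ}
    (hG : (∑ i ∈ Icc 1 k, Finsupp.single i (g i)) = α) : ∀ j, g j = α j := by
  intro j
  have h1 : (∑ i ∈ Icc 1 k, Finsupp.single i (g i)) j = α j := by rw [hG]
  rw [Gsum_apply] at h1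
  by_cases hj : j ∈ Icc 1 k
  · rwa [if_pos hj] at h1
  · rw [if_neg hj] at h1
    have hgj : g j = 0 := by
      by_contra hcon
      exact hj (hg j hcon)
    omega

lemma coeff_xpoly_pow (k : ℕ) (p : ℕ) (α : ℕ →₀ ℕ) :
    coeff α (xpoly k ^ p) =
      if α.support ⊆ Icc 1 k ∧ SZ k α = p then
        (-1 : ℂ) ^ (∑ j ∈ Icc 1 k, j * α j) * (Nat.multinomial (Icc 1 k) ⇑α : ℂ)
      else 0 := by
  have hterm : ∀ g : ℕ → ℕ,
      ((Nat.multinomial (Icc 1 k) g : WPoly) * ∏ i ∈ Icc 1 k, (C ((-1:ℂ)^i) * X i) ^ g i)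
      = C ((Nat.multinomial (Icc 1 k) g : ℂ) * (-1:ℂ) ^ (∑ i ∈ Icc 1 k, i * g i)) *
        monomial (∑ i ∈ Icc 1 k, Finsupp.single i (g i)) 1 := by
    intro g
    have h1 : ∀ i : ℕ, (C ((-1:ℂ)^i) * X i : WPoly) ^ g i
        = C ((-1:ℂ)^(i * g i)) * X i ^ g i := by
      intro i
      rw [mul_pow, ← map_pow, ← pow_mul]
    rw [Finset.prod_congr rfl (fun i _ => h1 i), Finset.prod_mul_distrib, ← map_prod,
      Finset.prod_pow_eq_pow_sum, prod_X_pow, map_mul]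
    have : ((Nat.multinomial (Icc 1 k) g : WPoly)) = C ((Nat.multinomial (Icc 1 k) g : ℂ)) := by
      push_cast
      simp
    rw [this]
    ring
  rw [show xpoly k = ∑ h ∈ Icc 1 k, C ((-1:ℂ)^h) * X h from rfl,
    Finset.sum_pow_eq_sum_piAntidiag, coeff_sum]
  simp_rw [hterm, coeff_C_mul, coeff_monomial]
  by_cases hα : α.support ⊆ Icc 1 k ∧ SZ k α = p
  · rw [if_pos hα]
    rw [Finset.sum_eq_single_of_mem (⇑α : ℕ → ℕ)]
    · have hG : (∑ i ∈ Icc 1 k, Finsupp.single i (α i)) = α := by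
        ext j
        rw [Gsum_apply]
        by_cases hj : j ∈ Icc 1 k
        · rw [if_pos hj]
        · rw [if_neg hj]
          by_contra hcon
          exact hj (hα.1 (Finsupp.mem_support_iff.2 fun h => hcon h.symm))
      rw [if_pos hG, mul_one, mul_comm]
    · rw [Finset.mem_piAntidiag]
      exact ⟨hα.2, fun i hi => hα.1 (Finsupp.mem_support_iff.2 hi)⟩
    · intro g hg hne
      rw [Finset.mem_piAntidiag] at hg
      rw [if_neg, mul_zero]
      intro hG
      exact hne (funext (g_eq k hg.2 hG))
  · rw [if_neg hα]
    apply Finset.sum_eq_zero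
    intro g hg
    rw [Finset.mem_piAntidiag] at hg
    rw [if_neg, mul_zero]
    intro hG
    have hge := g_eq k hg.2 hG
    apply hα
    constructor
    · intro i hi
      rw [Finsupp.mem_support_iff] at hi
      by_contra hcon
      have : g i = 0 := by
        by_contra h2
        exact hcon (hg.2 i h2)
      rw [← hge i] at hi
      exact hi this
    · rw [← hg.1]
      unfold SZ
      exact Finset.sum_congr rfl fun j _ => (hge j).symm

lemma coeff_Phi (k : ℕ) (μ : ℂ) (q : ℕ) (α : ℕ →₀ ℕ) :
    coeff α (Phi k μ q) = cph k μ q α := by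
  unfold Phi cph
  rw [coeff_weightPart, coeff_sum]
  simp_rw [coeff_smul, coeff_xpoly_pow, smul_eq_mul]
  by_cases hwt : wt α = q
  · rw [if_pos hwt]
    by_cases hs : α.support ⊆ Icc 1 k
    · rw [if_pos ⟨hs, hwt⟩]
      rw [Finset.sum_eq_single_of_mem (SZ k α)
        (Finset.mem_range.2 (Nat.lt_succ_of_le (hwt ▸ SZ_le_wt hs)))]
      · rw [if_pos ⟨hs, rfl⟩]
        have hWT : (∑ j ∈ Icc 1 k, j * α j) = q := by rw [← wt_eq_WT hs, hwt]
        rw [hWT]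
        have hspec := Nat.multinomial_spec (Icc 1 k) ⇑α
        have hcast : (fct k α) * (Nat.multinomial (Icc 1 k) ⇑α : ℂ)
            = ((SZ k α).factorial : ℂ) := by
          unfold fct SZ
          exact_mod_cast congrArg (Nat.cast : ℕ → ℂ) hspec
        have hmult : (Nat.multinomial (Icc 1 k) ⇑α : ℂ) = ((SZ k α).factorial : ℂ) / fct k α := by
          rw [eq_div_iff (fct_ne_zero k α)]
          rw [mul_comm]
          exact hcast
        rw [hmult]
        unfold GammaC pk
        have hfac : ((SZ k α).factorial : ℂ) ≠ 0 := Nat.cast_ne_zero.2 (Nat.factorial_ne_zero _)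
        have hfct := fct_ne_zero k α
        field_simp
        ring
      · intro p hp hne
        rw [if_neg (fun hc => hne hc.2.symm), mul_zero]
    · rw [if_neg (fun hc => hs hc.1)]
      apply Finset.sum_eq_zero
      intro p _
      rw [if_neg (fun hc => hs hc.1), mul_zero]
  · rw [if_neg hwt, if_neg (fun hc => hwt hc.2)]

end Aux


section Ops

lemma Mop_Dop_apply (f : WPoly) (h : ℕ) (p : WPoly) :
    (Mop f) ((Dop h) p) = f * pderiv h p := rfl

/-! #### `U₀ Φ_q = q Φ_q` -/

lemma U0_Phi (k : ℕ) (μ : ℂ) (q : ℕ) :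
    U0op k (Phi k μ q) = (q : ℂ) • Phi k μ q := by
  apply MvPolynomial.ext
  intro α
  rw [coeff_smul, smul_eq_mul, coeff_Phi]
  unfold U0op
  rw [LinearMap.sum_apply, coeff_sum]
  simp_rw [LinearMap.smul_apply, Module.End.mul_apply, coeff_smul, Mop_Dop_apply,
    coeff_X_mul_pderiv_self, coeff_Phi, smul_eq_mul]
  by_cases hα : α.support ⊆ Icc 1 k ∧ wt α = q
  · have hcongr : ∀ h ∈ Icc 1 k,
        (h : ℂ) * ((α h : ℂ) * cph k μ q α) = ((h * α h : ℕ) : ℂ) * cph k μ q α := by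
      intro h _
      push_cast
      ring
    rw [Finset.sum_congr rfl hcongr, ← Finset.sum_mul, ← Nat.cast_sum, ← wt_eq_WT hα.1, hα.2]
  · rw [cph_neg μ hα]
    simp

/-! #### `U₋₁ Φ_{q+1} = (kμ+q) Φ_q` -/

lemma claim0 (k : ℕ) (hk : 1 ≤ k) (μ : ℂ) (q : ℕ) (α : ℕ →₀ ℕ) :
    ((α 1 : ℂ) + 1) * cph k μ (q+1) (α + Finsupp.single 1 1)
      = (μ + (SZ k α : ℂ)) * cph k μ q α := by
  have h1k : (1:ℕ) ∈ Icc 1 k := mem_Icc.2 ⟨le_refl 1, hk⟩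
  by_cases hα : α.support ⊆ Icc 1 k ∧ wt α = q
  · rw [cph_pos μ ⟨supp_add_single h1k hα.1, by rw [wt_add_single, hα.2]⟩, cph_pos μ hα,
      SZ_add_single k α h1k, fct_add_single k α h1k, pk_succ]
    have hf := fct_ne_zero k α
    have hne : ((α 1 : ℂ) + 1) ≠ 0 := Nat.cast_add_one_ne_zero _
    field_simp
    ring
  · rw [cph_neg μ hα, mul_zero, cph_neg μ ?_, mul_zero]
    intro hβ
    apply hα
    constructor
    · intro i hi
      rcases eq_or_ne i 1 with rfl | hi1
      · exact h1k
      · exact hβ.1 (mem_supp_add_single (Finsupp.mem_support_iff.1 hi))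
    · have := hβ.2
      rw [wt_add_single] at this
      omega

lemma claimH (k : ℕ) (μ : ℂ) (q : ℕ) (α : ℕ →₀ ℕ) {h : ℕ} (h1 : 1 ≤ h) (h2 : h < k) :
    coeff α (X h * pderiv (h+1) (Phi k μ (q+1))) = -(α h : ℂ) * cph k μ q α := by
  rw [coeff_X_mul']
  by_cases h0 : α h = 0
  · rw [if_neg (by simp [Finsupp.mem_support_iff, h0]), h0]
    simp
  · rw [if_pos (Finsupp.mem_support_iff.2 h0), coeff_pderiv, coeff_Phi]
    set β := α - Finsupp.single h 1 with hβdef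
    have hβα : β + Finsupp.single h 1 = α := sub_add_single h0
    have hmem_h : h ∈ Icc 1 k := mem_Icc.2 ⟨h1, le_of_lt h2⟩
    have hmem_h1 : h+1 ∈ Icc 1 k := mem_Icc.2 ⟨by omega, h2⟩
    by_cases hα : α.support ⊆ Icc 1 k ∧ wt α = q
    · have hsβ : β.support ⊆ Icc 1 k := (supp_sub_single α h).trans hα.1
      have hwtα : wt α = wt β + h := by rw [← hβα, wt_add_single]
      have hgood : (β + Finsupp.single (h+1) 1).support ⊆ Icc 1 k ∧
          wt (β + Finsupp.single (h+1) 1) = q+1 :=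
        ⟨supp_add_single hmem_h1 hsβ, by rw [wt_add_single]; omega⟩
      rw [cph_pos μ hgood, cph_pos μ hα, SZ_add_single k β hmem_h1, fct_add_single k β hmem_h1]
      have hSZ : SZ k α = SZ k β + 1 := by rw [← hβα, SZ_add_single k β hmem_h]
      have hfct : fct k α = ((β h : ℂ) + 1) * fct k β := by
        rw [← hβα, fct_add_single k β hmem_h]
      have hαh : (α h : ℂ) = (β h : ℂ) + 1 := by
        rw [← hβα, add_single_apply_self]
        push_cast
        ring
      rw [hSZ, hfct, hαh]
      have hfβ := fct_ne_zero k β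
      have hne : ((β h : ℂ) + 1) ≠ 0 := Nat.cast_add_one_ne_zero _
      have hne2 : ((β (h+1) : ℂ) + 1) ≠ 0 := Nat.cast_add_one_ne_zero _
      field_simp
      ring
    · rw [cph_neg μ hα, mul_zero, cph_neg μ ?_, mul_zero]
      intro hgood
      apply hα
      constructor
      · intro i hi
        rcases eq_or_ne i h with rfl | hih
        · exact hmem_h
        rcases eq_or_ne i (h+1) with rfl | hih1
        · exact hmem_h1
        apply hgood.1
        rw [Finsupp.mem_support_iff, add_single_apply_ne β hih1, hβdef, Finsupp.tsub_apply,
          Finsupp.single_eq_of_ne' (Ne.symm hih)]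
        simpa using Finsupp.mem_support_iff.1 hi
      · have e1 : wt α = wt β + h := by rw [← hβα, wt_add_single]
        have e2 := hgood.2
        rw [wt_add_single] at e2
        omega

lemma Um1_Phi (k : ℕ) (hk : 1 ≤ k) (μ : ℂ) (q : ℕ) :
    Um1op k (Phi k μ (q+1)) = ((k : ℂ) * μ + q) • Phi k μ q := by
  apply MvPolynomial.ext
  intro α
  rw [coeff_smul, smul_eq_mul, coeff_Phi]
  unfold Um1op
  rw [LinearMap.sum_apply, coeff_sum]
  simp_rw [LinearMap.smul_apply, Module.End.mul_apply, coeff_smul, Mop_Dop_apply, smul_eq_mul]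
  rw [← Finset.add_sum_erase _ _ (Finset.mem_range.2 (by omega : 0 < k))]
  have hterm0 : ((k - 0 : ℕ) : ℂ) * coeff α (sig k 0 * pderiv (0+1) (Phi k μ (q+1)))
      = (k : ℂ) * ((μ + (SZ k α : ℂ)) * cph k μ q α) := by
    rw [show sig k 0 = 1 from rfl, one_mul, Nat.sub_zero, show (0+1 : ℕ) = 1 from rfl,
      coeff_pderiv, coeff_Phi, claim0 k hk μ q α]
  rw [hterm0]
  have hterm : ∀ h ∈ (Finset.range k).erase 0,
      ((k - h : ℕ) : ℂ) * coeff α (sig k h * pderiv (h+1) (Phi k μ (q+1)))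
      = -(((k - h : ℕ) : ℂ) * (α h : ℂ)) * cph k μ q α := by
    intro h hh
    obtain ⟨hne, hlt⟩ : h ≠ 0 ∧ h < k := by
      simpa [Finset.mem_erase, Finset.mem_range] using hh
    have hsig : sig k h = X h := by
      unfold sig
      rw [if_neg hne, if_pos (le_of_lt hlt)]
    rw [hsig, claimH k μ q α (by omega) hlt]
    ring
  rw [Finset.sum_congr rfl hterm]
  by_cases hα : α.support ⊆ Icc 1 k ∧ wt α = q
  · have hsub : (Finset.range k).erase 0 ⊆ Icc 1 k := by
      intro h hh
      obtain ⟨hne, hlt⟩ : h ≠ 0 ∧ h < k := by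
        simpa [Finset.mem_erase, Finset.mem_range] using hh
      exact mem_Icc.2 ⟨by omega, by omega⟩
    have hzero : ∀ h ∈ Icc 1 k, h ∉ (Finset.range k).erase 0 →
        -(((k - h : ℕ) : ℂ) * (α h : ℂ)) * cph k μ q α = 0 := by
      intro h hh hnot
      obtain ⟨hh1, hh2⟩ := mem_Icc.1 hh
      have : h = k := by
        by_contra hcon
        exact hnot (Finset.mem_erase.2 ⟨by omega, Finset.mem_range.2 (by omega)⟩)
      subst this
      simp
    rw [Finset.sum_subset hsub hzero]
    have hWT : ((∑ j ∈ Icc 1 k, j * α j : ℕ) : ℂ) = (q : ℂ) := by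
      rw [← wt_eq_WT hα.1, hα.2]
    have hcongr : ∀ h ∈ Icc 1 k,
        -(((k - h : ℕ) : ℂ) * (α h : ℂ)) * cph k μ q α
        = (((h * α h : ℕ) : ℂ) - (k : ℂ) * (α h : ℂ)) * cph k μ q α := by
      intro h hh
      rw [Nat.cast_sub (mem_Icc.1 hh).2]
      push_cast
      ring
    have hSZc : (∑ h ∈ Icc 1 k, (α h : ℂ)) = ((SZ k α : ℕ) : ℂ) := by
      unfold SZ
      rw [Nat.cast_sum]
    rw [Finset.sum_congr rfl hcongr, ← Finset.sum_mul, Finset.sum_sub_distrib,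
      ← Nat.cast_sum, hWT, ← Finset.mul_sum, hSZc]
    ring
  · rw [cph_neg μ hα]
    simp

/-! #### `(U₁ + μσ₁) Φ_q = (q+1) Φ_{q+1}` -/

lemma claim1h (k : ℕ) (μ : ℂ) (q : ℕ) (α : ℕ →₀ ℕ) (h : ℕ) :
    coeff α (X 1 * (X h * pderiv h (Phi k μ q))) =
      if α 1 = 0 then 0
      else ((α - Finsupp.single 1 1 : ℕ →₀ ℕ) h : ℂ) * cph k μ q (α - Finsupp.single 1 1) := by
  rw [coeff_X_mul']
  by_cases h0 : α 1 = 0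
  · rw [if_neg (by simp [Finsupp.mem_support_iff, h0]), if_pos h0]
  · rw [if_pos (Finsupp.mem_support_iff.2 h0), if_neg h0, coeff_X_mul_pderiv_self, coeff_Phi]

lemma claimS1 (k : ℕ) (hk : 1 ≤ k) (μ : ℂ) (q : ℕ) (α : ℕ →₀ ℕ) :
    (μ * (if α 1 = 0 then 0 else cph k μ q (α - Finsupp.single 1 1))
      + ∑ h ∈ Icc 1 k, (if α 1 = 0 then 0
          else ((α - Finsupp.single 1 1 : ℕ →₀ ℕ) h : ℂ) * cph k μ q (α - Finsupp.single 1 1)))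
    = (α 1 : ℂ) * cph k μ (q+1) α := by
  by_cases h0 : α 1 = 0
  · simp [h0]
  · simp only [if_neg h0]
    set β := α - Finsupp.single 1 1 with hβdef
    have h1k : (1:ℕ) ∈ Icc 1 k := mem_Icc.2 ⟨le_refl 1, hk⟩
    have hβα : β + Finsupp.single 1 1 = α := sub_add_single h0
    rw [← Finset.sum_mul]
    by_cases hα : α.support ⊆ Icc 1 k ∧ wt α = q + 1
    · have hsβ : β.support ⊆ Icc 1 k := (supp_sub_single α 1).trans hα.1
      have hwtα : wt α = wt β + 1 := by rw [← hβα, wt_add_single]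
      have hwtβ : wt β = q := by omega
      rw [cph_pos μ ⟨hsβ, hwtβ⟩, cph_pos μ hα]
      have hSZ : SZ k α = SZ k β + 1 := by rw [← hβα, SZ_add_single k β h1k]
      have hfct : fct k α = ((β 1 : ℂ) + 1) * fct k β := by
        rw [← hβα, fct_add_single k β h1k]
      have hαh : (α 1 : ℂ) = (β 1 : ℂ) + 1 := by
        rw [← hβα, add_single_apply_self]
        push_cast
        ring
      have hSZc : (∑ h ∈ Icc 1 k, (β h : ℂ)) = ((SZ k β : ℕ) : ℂ) := by
        unfold SZ
        rw [Nat.cast_sum]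
      rw [hSZ, hfct, hαh, hSZc, pk_succ]
      have hfβ := fct_ne_zero k β
      have hne : ((β 1 : ℂ) + 1) ≠ 0 := Nat.cast_add_one_ne_zero _
      field_simp
      ring
    · rw [cph_neg μ hα, cph_neg μ ?_]
      · simp
      intro hβg
      apply hα
      constructor
      · intro i hi
        rcases eq_or_ne i 1 with rfl | hne
        · exact h1k
        apply hβg.1
        rw [Finsupp.mem_support_iff, hβdef, Finsupp.tsub_apply,
          Finsupp.single_eq_of_ne' (Ne.symm hne)]
        simpa using Finsupp.mem_support_iff.1 hi
      · have : wt α = wt β + 1 := by rw [← hβα, wt_add_single]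
        omega

lemma claim2h (k : ℕ) (μ : ℂ) (q : ℕ) (α : ℕ →₀ ℕ) {h : ℕ} (hh : h ∈ Icc 1 k) :
    coeff α (sig k (h+1) * pderiv h (Phi k μ q)) = -(α (h+1) : ℂ) * cph k μ (q+1) α := by
  obtain ⟨hh1, hh2⟩ := mem_Icc.1 hh
  rcases eq_or_lt_of_le hh2 with rfl | hlt
  · have hs0 : sig h (h+1) = 0 := by
      unfold sig
      rw [if_neg (by omega), if_neg (by omega)]
    rw [hs0, zero_mul]
    by_cases hα : α.support ⊆ Icc 1 h ∧ wt α = q+1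
    · have h0 : α (h+1) = 0 := by
        by_contra hcon
        have := mem_Icc.1 (hα.1 (Finsupp.mem_support_iff.2 hcon))
        omega
      rw [h0]
      simp
    · rw [cph_neg μ hα]
      simp
  · have hsig : sig k (h+1) = X (h+1) := by
      unfold sig
      rw [if_neg (by omega), if_pos (by omega : h + 1 ≤ k)]
    rw [hsig, coeff_X_mul']
    by_cases h0 : α (h+1) = 0
    · rw [if_neg (by simp [Finsupp.mem_support_iff, h0]), h0]
      simp
    · rw [if_pos (Finsupp.mem_support_iff.2 h0), coeff_pderiv, coeff_Phi]
      set β := α - Finsupp.single (h+1) 1 with hβdef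
      have hβα : β + Finsupp.single (h+1) 1 = α := sub_add_single h0
      have hm1 : h+1 ∈ Icc 1 k := mem_Icc.2 ⟨by omega, hlt⟩
      by_cases hα : α.support ⊆ Icc 1 k ∧ wt α = q+1
      · have hsβ : β.support ⊆ Icc 1 k := (supp_sub_single α (h+1)).trans hα.1
        have e1 : wt α = wt β + (h+1) := by rw [← hβα, wt_add_single]
        have hgood : (β + Finsupp.single h 1).support ⊆ Icc 1 k ∧
            wt (β + Finsupp.single h 1) = q :=
          ⟨supp_add_single hh hsβ, by rw [wt_add_single]; omega⟩
        rw [cph_pos μ hgood, cph_pos μ hα, SZ_add_single k β hh, fct_add_single k β hh]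
        have hSZ : SZ k α = SZ k β + 1 := by rw [← hβα, SZ_add_single k β hm1]
        have hfct : fct k α = ((β (h+1) : ℂ) + 1) * fct k β := by
          rw [← hβα, fct_add_single k β hm1]
        have hαh1 : (α (h+1) : ℂ) = (β (h+1) : ℂ) + 1 := by
          rw [← hβα, add_single_apply_self]
          push_cast
          ring
        rw [hSZ, hfct, hαh1]
        have hfβ := fct_ne_zero k β
        have hne : ((β (h+1) : ℂ) + 1) ≠ 0 := Nat.cast_add_one_ne_zero _
        have hne2 : ((β h : ℂ) + 1) ≠ 0 := Nat.cast_add_one_ne_zero _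
        field_simp
        ring
      · rw [cph_neg μ hα, mul_zero, cph_neg μ ?_, mul_zero]
        intro hg
        apply hα
        constructor
        · intro i hi
          rcases eq_or_ne i (h+1) with rfl | hne1
          · exact hm1
          rcases eq_or_ne i h with rfl | hne2
          · exact hh
          apply hg.1
          rw [Finsupp.mem_support_iff, add_single_apply_ne β hne2, hβdef, Finsupp.tsub_apply,
            Finsupp.single_eq_of_ne' (Ne.symm hne1)]
          simpa using Finsupp.mem_support_iff.1 hi
        · have e1 : wt α = wt β + (h+1) := by rw [← hβα, wt_add_single]
          have e2 := hg.2
          rw [wt_add_single] at e2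
          omega

lemma sum_shift (k : ℕ) (hk : 1 ≤ k) (α : ℕ →₀ ℕ) (hs : α.support ⊆ Icc 1 k) :
    α 1 + ∑ h ∈ Icc 1 k, (h+1) * α (h+1) = wt α := by
  have h1 : ∑ h ∈ Icc 1 k, (h+1) * α (h+1) = ∑ j ∈ Icc 2 (k+1), j * α j := by
    rw [show Icc 2 (k+1) = Finset.map (addRightEmbedding 1) (Icc 1 k) by
      rw [Finset.map_add_right_Icc], Finset.sum_map]
    rfl
  have hk1 : α (k+1) = 0 := by
    by_contra hcon
    have := mem_Icc.1 (hs (Finsupp.mem_support_iff.2 hcon))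
    omega
  have h2 : α 1 + ∑ j ∈ Icc 2 (k+1), j * α j = ∑ j ∈ Icc 1 (k+1), j * α j := by
    have hins : Icc 1 (k+1) = insert 1 (Icc 2 (k+1)) := by
      ext x
      simp only [mem_Icc, Finset.mem_insert]
      omega
    rw [hins, Finset.sum_insert (by simp [mem_Icc]), one_mul]
  have h3 : ∑ j ∈ Icc 1 (k+1), j * α j = ∑ j ∈ Icc 1 k, j * α j := by
    rw [Finset.sum_Icc_succ_top (by omega : 1 ≤ k+1), hk1, mul_zero, add_zero]
  rw [h1, h2, h3, ← wt_eq_WT hs]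

lemma U1_Phi (k : ℕ) (hk : 1 ≤ k) (μ : ℂ) (q : ℕ) :
    (U1op k + μ • Mop (X 1)) (Phi k μ q) = ((q : ℂ) + 1) • Phi k μ (q+1) := by
  apply MvPolynomial.ext
  intro α
  rw [LinearMap.add_apply, coeff_add, LinearMap.smul_apply, coeff_smul, smul_eq_mul,
    coeff_smul, smul_eq_mul, coeff_Phi]
  have hM : (Mop (X 1)) (Phi k μ q) = X 1 * Phi k μ q := rfl
  rw [hM, coeff_X_mul']
  have hmu : (if (1:ℕ) ∈ α.support then coeff (α - Finsupp.single 1 1) (Phi k μ q) else 0)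
      = (if α 1 = 0 then 0 else cph k μ q (α - Finsupp.single 1 1)) := by
    by_cases h0 : α 1 = 0
    · rw [if_neg (by simp [Finsupp.mem_support_iff, h0]), if_pos h0]
    · rw [if_pos (Finsupp.mem_support_iff.2 h0), if_neg h0, coeff_Phi]
  rw [hmu]
  unfold U1op
  rw [LinearMap.sum_apply, coeff_sum]
  have hterm : ∀ h ∈ Icc 1 k,
      coeff α ((Mop (X 1 * X h - ((h + 1 : ℕ) : ℂ) • sig k (h+1)) * Dop h) (Phi k μ q))
      = (if α 1 = 0 then 0
          else ((α - Finsupp.single 1 1 : ℕ →₀ ℕ) h : ℂ) * cph k μ q (α - Finsupp.single 1 1))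
        + ((h + 1 : ℕ) : ℂ) * (α (h+1) : ℂ) * cph k μ (q+1) α := by
    intro h hh
    have happ : (Mop (X 1 * X h - ((h + 1 : ℕ) : ℂ) • sig k (h+1)) * Dop h) (Phi k μ q)
        = X 1 * (X h * pderiv h (Phi k μ q))
          - ((h + 1 : ℕ) : ℂ) • (sig k (h+1) * pderiv h (Phi k μ q)) := by
      rw [Module.End.mul_apply]
      show (X 1 * X h - ((h + 1 : ℕ) : ℂ) • sig k (h+1)) * pderiv h (Phi k μ q) = _
      rw [sub_mul, smul_mul_assoc, mul_assoc]
    rw [happ, coeff_sub, coeff_smul, smul_eq_mul, claim1h k μ q α h, claim2h k μ q α hh]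
    ring
  rw [Finset.sum_congr rfl hterm, Finset.sum_add_distrib]
  have hS1 := claimS1 k hk μ q α
  have hfac : ∀ h ∈ Icc 1 k, ((h + 1 : ℕ) : ℂ) * (α (h+1) : ℂ) * cph k μ (q+1) α
      = (((h + 1) * α (h+1) : ℕ) : ℂ) * cph k μ (q+1) α := by
    intro h _
    push_cast
    ring
  rw [Finset.sum_congr rfl hfac, ← Finset.sum_mul, ← Nat.cast_sum]
  by_cases hα : α.support ⊆ Icc 1 k ∧ wt α = q + 1
  · have hsum : (α 1 : ℂ) + ((∑ h ∈ Icc 1 k, (h+1) * α (h+1) : ℕ) : ℂ) = (q : ℂ) + 1 := by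
      have hn := sum_shift k hk α hα.1
      rw [hα.2] at hn
      exact_mod_cast hn
    linear_combination hS1 + hsum * cph k μ (q+1) α
  · rw [cph_neg μ hα] at hS1 ⊢
    linear_combination hS1

end Ops

/-! #### the degenerate case `q = 0` -/

lemma Phi_zero_eq_one (k : ℕ) (μ : ℂ) : Phi k μ 0 = 1 := by
  apply MvPolynomial.ext
  intro α
  rw [coeff_Phi, MvPolynomial.coeff_one]
  by_cases h : α = 0
  · subst h
    have hwt : wt (0 : ℕ →₀ ℕ) = 0 := by simp [wt]
    rw [cph_pos μ ⟨by simp, hwt⟩, if_pos rfl]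
    have h1 : SZ k 0 = 0 := by simp [SZ]
    have h2 : fct k 0 = 1 := by simp [fct]
    rw [h1, h2]
    simp [pk]
  · rw [if_neg (fun hcon => h hcon.symm)]
    apply cph_neg
    rintro ⟨hs, hwt⟩
    apply h
    ext i
    rw [Finsupp.coe_zero, Pi.zero_apply]
    by_cases hi : i ∈ α.support
    · have h1 : i * α i = 0 := by
        have := (Finset.sum_eq_zero_iff.1 hwt) i hi
        exact this
      have h2 := (mem_Icc.1 (hs hi)).1
      rcases Nat.mul_eq_zero.1 h1 with h3 | h3
      · omega
      · exact h3
    · exact Finsupp.notMem_support_iff.1 hi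

lemma Um1_Phi_zero (k : ℕ) (μ : ℂ) : Um1op k (Phi k μ 0) = 0 := by
  rw [Phi_zero_eq_one]
  unfold Um1op
  rw [LinearMap.sum_apply]
  apply Finset.sum_eq_zero
  intro h _
  rw [LinearMap.smul_apply, Module.End.mul_apply]
  have hD : (Dop (h+1)) (1 : WPoly) = 0 := by
    show pderiv (h+1) (1 : WPoly) = 0
    simp
  rw [hD, map_zero, smul_zero]

/-- Modulo the ideal `I_μ` (the annihilator of all the `Φ_{μ,q}`), one has
`(U_1 + μσ_1) U_{-1} ≡ U_0 (U_0 + kμ - 1)` and `U_{-1} (U_1 + μσ_1) ≡ (U_0 + kμ)(U_0 + 1)`;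
equivalently, both sides agree when applied to every polynomial `Φ_{μ,q}`. -/
theorem operator_identities_mod_Imu (k : ℕ) (hk : 1 ≤ k) (μ : ℂ) (q : ℕ) :
    ((U1op k + μ • Mop (X 1)) * Um1op k) (Phi k μ q) =
      (U0op k * (U0op k + ((k : ℂ) * μ - 1) • (1 : Module.End ℂ WPoly))) (Phi k μ q) ∧
    (Um1op k * (U1op k + μ • Mop (X 1))) (Phi k μ q) =
      ((U0op k + ((k : ℂ) * μ) • (1 : Module.End ℂ WPoly)) *
        (U0op k + (1 : Module.End ℂ WPoly))) (Phi k μ q) := by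
  constructor
  · have hRHS : (U0op k + ((k : ℂ) * μ - 1) • (1 : Module.End ℂ WPoly)) (Phi k μ q)
        = ((q : ℂ) + ((k : ℂ) * μ - 1)) • Phi k μ q := by
      rw [LinearMap.add_apply, LinearMap.smul_apply, Module.End.one_apply, U0_Phi, ← add_smul]
    rw [Module.End.mul_apply, Module.End.mul_apply, hRHS, map_smul, U0_Phi, smul_smul]
    cases q with
    | zero =>
      rw [Um1_Phi_zero k μ, map_zero]
      simp
    | succ n =>
      rw [Um1_Phi k hk μ n, map_smul, U1_Phi k hk μ n, smul_smul]
      congr 1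
      push_cast
      ring
  · have hR1 : (U0op k + (1 : Module.End ℂ WPoly)) (Phi k μ q) = ((q : ℂ) + 1) • Phi k μ q := by
      rw [LinearMap.add_apply, Module.End.one_apply, U0_Phi]
      rw [add_smul, one_smul]
    have hR2 : ∀ p : WPoly, (U0op k + ((k : ℂ) * μ) • (1 : Module.End ℂ WPoly)) p
        = U0op k p + ((k : ℂ) * μ) • p := by
      intro p
      rw [LinearMap.add_apply, LinearMap.smul_apply, Module.End.one_apply]
    rw [Module.End.mul_apply, U1_Phi k hk μ q, map_smul, Um1_Phi k hk μ q, smul_smul,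
      Module.End.mul_apply, hR1, hR2, map_smul, U0_Phi, smul_smul, smul_smul, ← add_smul]
    congr 1
    push_cast
    ring

end
end

section
/- In the Weyl algebra, for j ∈ [2,k] one has ∂_j(U_1 + μσ_1) + (λ+1)∂_{j−1} = −Σ_{h=1}^{k−1}(h+1)σ_{h+1}A_{h,j} + σ_1 T^j_μ − ∂_{j−1}(U_0 − λ), and for j = 1: ∂_1(U_1 + μσ_1) − (λ+1)(E+μ) = (E+μ)(U_0 − λ) − Σ_{h=1}^{k−1}(h+1)σ_{h+1}T^{h+1}_μ. -/
open MvPolynomial Finset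

noncomputable section

lemma Mop_mul' (p q : WPoly) : Mop (p * q) = Mop p * Mop q := by
  apply LinearMap.ext; intro f; simp [Mop, mul_assoc]
lemma Mop_one' : Mop (1 : WPoly) = 1 := LinearMap.mulLeft_one ℂ WPoly
lemma Mop_zero' : Mop (0 : WPoly) = 0 := by
  apply LinearMap.ext; intro f; simp [Mop]
lemma Mop_sub (p q : WPoly) : Mop (p - q) = Mop p - Mop q := by
  apply LinearMap.ext; intro f; simp [Mop, sub_mul]
lemma Mop_smul (c : ℂ) (p : WPoly) : Mop (c • p) = c • Mop p := by
  apply LinearMap.ext; intro f; simp [Mop, smul_mul_assoc]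

lemma pderiv_comm' (a b : ℕ) (f : WPoly) :
    pderiv a (pderiv b f) = pderiv b (pderiv a f) := by
  induction f using MvPolynomial.induction_on' with
  | monomial s c =>
      rcases eq_or_ne a b with rfl | hab
      · rfl
      · have hA : (s - Finsupp.single b 1 : ℕ →₀ ℕ) a = s a := by
          rw [Finsupp.tsub_apply, Finsupp.single_apply, if_neg (Ne.symm hab), tsub_zero]
        have hB : (s - Finsupp.single a 1 : ℕ →₀ ℕ) b = s b := by
          rw [Finsupp.tsub_apply, Finsupp.single_apply, if_neg hab, tsub_zero]
        simp only [pderiv_monomial, hA, hB, tsub_tsub]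
        rw [add_comm (Finsupp.single b 1) (Finsupp.single a 1), mul_right_comm]
  | add p q hp hq => simp [hp, hq]

lemma Dop_Dop (a b : ℕ) : Dop a * Dop b = Dop b * Dop a := by
  apply LinearMap.ext; intro f
  exact pderiv_comm' a b f

lemma Dop_Mop (h : ℕ) (p : WPoly) :
    Dop h * Mop p = Mop p * Dop h + Mop (pderiv h p) := by
  apply LinearMap.ext; intro f
  simp only [Dop, Mop, Module.End.mul_apply, LinearMap.add_apply, LinearMap.mulLeft_apply,
    Derivation.coeFn_coe]
  rw [pderiv_mul]; ring

lemma Dop_MopX (h i : ℕ) :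
    Dop h * Mop (X i) = Mop (X i) * Dop h + if h = i then 1 else 0 := by
  rw [Dop_Mop]
  rcases eq_or_ne h i with rfl | hne
  · simp [Mop_one']
  · simp [hne, Mop_zero']


/-- `S := Σ_{h=1}^{k-1} (h+1) σ_{h+1} ∂_h`. -/
def Sop (k : ℕ) : Module.End ℂ WPoly :=
  ∑ h ∈ Icc 1 (k - 1), ((h + 1 : ℕ) : ℂ) • (Mop (X (h + 1)) * Dop h)

lemma U1_eq (m : ℕ) : U1op (m + 1) = Mop (X 1) * Eop (m + 1) - Sop (m + 1) := by
  have h1 : U1op (m + 1) =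
      (∑ h ∈ Icc 1 (m + 1), Mop (X 1) * (Mop (X h) * Dop h)) -
        ∑ h ∈ Icc 1 (m + 1), ((h + 1 : ℕ) : ℂ) • (Mop (sig (m + 1) (h + 1)) * Dop h) := by
    rw [U1op, ← Finset.sum_sub_distrib]
    refine Finset.sum_congr rfl fun h _ => ?_
    rw [Mop_sub, Mop_mul', Mop_smul, sub_mul, smul_mul_assoc, mul_assoc]
  rw [h1, ← Finset.mul_sum, ← Eop]
  congr 1
  rw [Sop, Nat.add_sub_cancel, Finset.sum_Icc_succ_top (Nat.le_add_left 1 m)]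
  have h2 : sig (m + 1) (m + 1 + 1) = 0 := by
    simp [sig, Nat.succ_ne_zero]
  rw [h2, Mop_zero', zero_mul, smul_zero, add_zero]
  refine Finset.sum_congr rfl fun h hh => ?_
  have : sig (m + 1) (h + 1) = X (h + 1) := by
    simp only [mem_Icc] at hh
    simp [sig, Nat.succ_le_succ hh.2]
  rw [this]

lemma Sop_shift (m : ℕ) :
    ∑ h ∈ Icc 1 m, ((h + 1 : ℕ) : ℂ) • (Mop (X (h + 1)) * Dop (h + 1)) =
      U0op (m + 1) - Mop (X 1) * Dop 1 := by
  have h1 : Icc 1 (m + 1) = insert 1 (Icc 2 (m + 1)) := by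
    ext x; simp only [mem_Icc, mem_insert]; omega
  rw [U0op, h1, Finset.sum_insert (by simp [mem_Icc])]
  rw [← map_add_right_Icc 1 m 1, Finset.sum_map]
  simp only [addRightEmbedding_apply, Nat.cast_one, one_smul]
  abel

lemma Dop_term (j a h : ℕ) (c : ℂ) :
    Dop j * (c • (Mop (X a) * Dop h)) =
      c • (Mop (X a) * Dop h * Dop j) + (if j = a then c • Dop h else 0) := by
  rw [mul_smul_comm, ← mul_assoc, Dop_MopX, add_mul, mul_assoc, Dop_Dop j h, ← mul_assoc,
    smul_add]
  congr 1
  rcases eq_or_ne j a with rfl | hne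
  · simp
  · simp [hne]

lemma Dop_mul_sum (s : Finset ℕ) (c : ℕ → ℂ) (a : ℕ → ℕ) (j : ℕ) :
    Dop j * (∑ h ∈ s, c h • (Mop (X (a h)) * Dop h)) =
      (∑ h ∈ s, c h • (Mop (X (a h)) * Dop h)) * Dop j
        + ∑ h ∈ s, (if j = a h then c h • Dop h else 0) := by
  rw [Finset.mul_sum, Finset.sum_mul, ← Finset.sum_add_distrib]
  refine Finset.sum_congr rfl fun h _ => ?_
  rw [Dop_term, smul_mul_assoc]

lemma Dop_Eop (k j : ℕ) (hj : j ∈ Icc 1 k) :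
    Dop j * Eop k = Eop k * Dop j + Dop j := by
  have h1 : Eop k = ∑ h ∈ Icc 1 k, (1 : ℂ) • (Mop (X h) * Dop h) := by
    simp [Eop]
  rw [h1, Dop_mul_sum (a := fun h => h)]
  congr 1
  rw [Finset.sum_ite_eq]
  simp [hj]

lemma Dop_U0op (k j : ℕ) (hj : j ∈ Icc 1 k) :
    Dop j * U0op k = U0op k * Dop j + (j : ℂ) • Dop j := by
  rw [U0op, Dop_mul_sum (a := fun h => h)]
  congr 1
  rw [Finset.sum_ite_eq]
  simp [hj]

lemma Dop_Sop (k j : ℕ) (hj : 1 ≤ j) :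
    Dop j * Sop k = Sop k * Dop j +
      (if j - 1 ∈ Icc 1 (k - 1) then (j : ℂ) • Dop (j - 1) else 0) := by
  rw [Sop, Dop_mul_sum (a := fun h => h + 1)]
  congr 1
  have h1 : ∀ h : ℕ, (j = h + 1) = (j - 1 = h) := by
    intro h; apply propext; omega
  simp only [h1]
  rw [Finset.sum_ite_eq]
  rcases Finset.decidableMem (j-1) (Icc 1 (k-1)) with h | h
  · simp [h]
  · simp only [h, if_true]
    congr 2
    omega

lemma MD_norm (a b : ℕ) (hne : a ≠ b) :
    (Mop (X a) * Dop a) * (Mop (X b) * Dop b) = Mop (X a * X b) * (Dop a * Dop b) := by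
  rw [mul_assoc, ← mul_assoc (Dop a), Dop_MopX, if_neg hne, add_zero, Mop_mul',
    mul_assoc, mul_assoc]

lemma MD_comm (h i : ℕ) :
    (Mop (X h) * Dop h) * (Mop (X i) * Dop i) = (Mop (X i) * Dop i) * (Mop (X h) * Dop h) := by
  rcases eq_or_ne h i with rfl | hne
  · rfl
  · rw [MD_norm h i hne, MD_norm i h (Ne.symm hne), mul_comm (X i) (X h), Dop_Dop i h]

lemma Eop_U0op_comm (k : ℕ) : Eop k * U0op k = U0op k * Eop k := by
  rw [Eop, U0op, Finset.sum_mul_sum, Finset.sum_mul_sum, Finset.sum_comm]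
  refine Finset.sum_congr rfl fun h _ => Finset.sum_congr rfl fun i _ => ?_
  rw [mul_smul_comm, smul_mul_assoc, MD_comm]

lemma sum_MA (m j : ℕ) (hj : j ∈ Icc 2 (m + 1)) :
    ∑ h ∈ Icc 1 (m + 1 - 1), ((h + 1 : ℕ) : ℂ) • (Mop (X (h + 1)) * Aop h j) =
      Sop (m + 1) * Dop j - U0op (m + 1) * Dop (j - 1) + Mop (X 1) * (Dop 1 * Dop (j - 1)) := by
  simp only [Nat.add_sub_cancel]
  have h1 : ∀ h ∈ Icc 1 m, ((h + 1 : ℕ) : ℂ) • (Mop (X (h + 1)) * Aop h j) =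
      ((h + 1 : ℕ) : ℂ) • (Mop (X (h + 1)) * (Dop h * Dop j)) -
        ((h + 1 : ℕ) : ℂ) • (Mop (X (h + 1)) * (Dop (h + 1) * Dop (j - 1))) := by
    intro h _
    rw [Aop, mul_sub, smul_sub]
  rw [Finset.sum_congr rfl h1, Finset.sum_sub_distrib]
  have h2 : ∑ h ∈ Icc 1 m, ((h + 1 : ℕ) : ℂ) • (Mop (X (h + 1)) * (Dop h * Dop j)) =
      Sop (m + 1) * Dop j := by
    rw [Sop, Nat.add_sub_cancel, Finset.sum_mul]
    exact Finset.sum_congr rfl fun h _ => by rw [smul_mul_assoc, mul_assoc]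
  have h3 : ∑ h ∈ Icc 1 m, ((h + 1 : ℕ) : ℂ) • (Mop (X (h + 1)) * (Dop (h + 1) * Dop (j - 1))) =
      U0op (m + 1) * Dop (j - 1) - Mop (X 1) * (Dop 1 * Dop (j - 1)) := by
    have : ∑ h ∈ Icc 1 m, ((h + 1 : ℕ) : ℂ) • (Mop (X (h + 1)) * (Dop (h + 1) * Dop (j - 1))) =
        (∑ h ∈ Icc 1 m, ((h + 1 : ℕ) : ℂ) • (Mop (X (h + 1)) * Dop (h + 1))) * Dop (j - 1) := by
      rw [Finset.sum_mul]
      exact Finset.sum_congr rfl fun h _ => by rw [smul_mul_assoc, mul_assoc]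
    rw [this, Sop_shift, sub_mul, mul_assoc]
  rw [h2, h3]
  abel

lemma sum_MT (m : ℕ) (μ : ℂ) :
    ∑ h ∈ Icc 1 (m + 1 - 1), ((h + 1 : ℕ) : ℂ) • (Mop (X (h + 1)) * Tmu (m + 1) μ (h + 1)) =
      Sop (m + 1) * Dop 1 + U0op (m + 1) * Eop (m + 1) + μ • U0op (m + 1)
        - Mop (X 1) * (Eop (m + 1) * Dop 1) - Mop (X 1) * Dop 1 - μ • (Mop (X 1) * Dop 1) := by
  simp only [Nat.add_sub_cancel]
  have h1 : ∀ h ∈ Icc 1 m, ((h + 1 : ℕ) : ℂ) • (Mop (X (h + 1)) * Tmu (m + 1) μ (h + 1)) =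
      ((h + 1 : ℕ) : ℂ) • (Mop (X (h + 1)) * (Dop h * Dop 1)) +
        ((h + 1 : ℕ) : ℂ) •
          (Mop (X (h + 1)) * (Dop (h + 1) * (Eop (m + 1) + μ • (1 : Module.End ℂ WPoly)))) := by
    intro h _
    rw [Tmu, Nat.add_sub_cancel, Dop_Dop 1 h, mul_add, smul_add]
  rw [Finset.sum_congr rfl h1, Finset.sum_add_distrib]
  have h2 : ∑ h ∈ Icc 1 m, ((h + 1 : ℕ) : ℂ) • (Mop (X (h + 1)) * (Dop h * Dop 1)) =
      Sop (m + 1) * Dop 1 := by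
    rw [Sop, Nat.add_sub_cancel, Finset.sum_mul]
    exact Finset.sum_congr rfl fun h _ => by rw [smul_mul_assoc, mul_assoc]
  have h3 : ∑ h ∈ Icc 1 m, ((h + 1 : ℕ) : ℂ) •
        (Mop (X (h + 1)) * (Dop (h + 1) * (Eop (m + 1) + μ • (1 : Module.End ℂ WPoly)))) =
      (U0op (m + 1) - Mop (X 1) * Dop 1) * (Eop (m + 1) + μ • (1 : Module.End ℂ WPoly)) := by
    rw [← Sop_shift, Finset.sum_mul]
    exact Finset.sum_congr rfl fun h _ => by rw [smul_mul_assoc, mul_assoc]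
  have h4 : Dop 1 * (Eop (m + 1) + μ • (1 : Module.End ℂ WPoly)) =
      Eop (m + 1) * Dop 1 + Dop 1 + μ • Dop 1 := by
    rw [mul_add, Dop_Eop (m + 1) 1 (by simp [mem_Icc, Nat.le_add_left]), mul_smul_comm, mul_one]
  rw [h2, h3, sub_mul, mul_assoc, h4]
  simp only [mul_add, mul_smul_comm, mul_one]
  module


/-- Formulas `(F_j(μ))` : for `j ∈ [2,k]`,
`∂_j (U_1 + μσ_1) + (λ+1) ∂_{j-1}
  = -Σ_{h=1}^{k-1} (h+1) σ_{h+1} A_{h,j} + σ_1 T^j_μ - ∂_{j-1}(U_0 - λ)`,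
and for `j = 1`,
`∂_1 (U_1 + μσ_1) - (λ+1)(E+μ) = (E+μ)(U_0 - λ) - Σ_{h=1}^{k-1} (h+1) σ_{h+1} T^{h+1}_μ`. -/
theorem magic_formulas_Fj (k : ℕ) (hk : 1 ≤ k) (μ lam : ℂ) :
    (∀ j ∈ Icc 2 k,
      Dop j * (U1op k + μ • Mop (X 1)) + (lam + 1) • Dop (j - 1) =
        -(∑ h ∈ Icc 1 (k - 1), ((h + 1 : ℕ) : ℂ) • (Mop (X (h + 1)) * Aop h j)) +
          Mop (X 1) * Tmu k μ j -
          Dop (j - 1) * (U0op k - lam • (1 : Module.End ℂ WPoly))) ∧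
    (Dop 1 * (U1op k + μ • Mop (X 1)) -
        (lam + 1) • (Eop k + μ • (1 : Module.End ℂ WPoly)) =
      (Eop k + μ • (1 : Module.End ℂ WPoly)) *
          (U0op k - lam • (1 : Module.End ℂ WPoly)) -
        ∑ h ∈ Icc 1 (k - 1), ((h + 1 : ℕ) : ℂ) • (Mop (X (h + 1)) * Tmu k μ (h + 1))) := by
  obtain ⟨m, rfl⟩ : ∃ m, k = m + 1 := ⟨k - 1, (Nat.succ_pred_eq_of_pos hk).symm⟩
  constructor
  · intro j hj
    simp only [mem_Icc] at hj
    have hj1 : 1 ≤ j := le_trans one_le_two hj.1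
    have hjne : j ≠ 1 := by omega
    have hjE : j ∈ Icc 1 (m + 1) := by simp [mem_Icc]; omega
    have hjm1 : j - 1 ∈ Icc 1 (m + 1) := by simp [mem_Icc]; omega
    have hjS : j - 1 ∈ Icc 1 (m + 1 - 1) := by simp [mem_Icc]; omega
    have c5 : Dop j * Mop (X 1) = Mop (X 1) * Dop j := by
      rw [Dop_MopX, if_neg hjne, add_zero]
    have c1 : Dop j * U1op (m + 1) =
        Mop (X 1) * (Eop (m + 1) * Dop j) + Mop (X 1) * Dop j
          - Sop (m + 1) * Dop j - (j : ℂ) • Dop (j - 1) := by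
      rw [U1_eq, mul_sub, ← mul_assoc, c5, mul_assoc, Dop_Eop (m + 1) j hjE,
        Dop_Sop (m + 1) j hj1, if_pos hjS, mul_add]
      abel
    have c3 : Mop (X 1) * Tmu (m + 1) μ j =
        Mop (X 1) * (Dop 1 * Dop (j - 1)) + Mop (X 1) * (Eop (m + 1) * Dop j)
          + Mop (X 1) * Dop j + μ • (Mop (X 1) * Dop j) := by
      have hDjE' : Dop j * (Eop (m + 1) + μ • (1 : Module.End ℂ WPoly)) =
          Eop (m + 1) * Dop j + Dop j + μ • Dop j := by
        rw [mul_add, Dop_Eop (m + 1) j hjE, mul_smul_comm, mul_one]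
      rw [Tmu, mul_add, hDjE']
      simp only [mul_add, mul_smul_comm]
      abel
    have c4 : Dop (j - 1) * (U0op (m + 1) - lam • (1 : Module.End ℂ WPoly)) =
        U0op (m + 1) * Dop (j - 1) + ((j : ℂ) - 1) • Dop (j - 1) - lam • Dop (j - 1) := by
      rw [mul_sub, mul_smul_comm, mul_one, Dop_U0op (m + 1) (j - 1) hjm1,
        Nat.cast_sub hj1, Nat.cast_one]
    rw [mul_add, c1, mul_smul_comm, c5, sum_MA m j (by simp [mem_Icc]; omega), c3, c4]
    module
  · have h1E : (1 : ℕ) ∈ Icc 1 (m + 1) := by simp [mem_Icc]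
    have c1 : Dop 1 * U1op (m + 1) =
        Mop (X 1) * (Eop (m + 1) * Dop 1) + Mop (X 1) * Dop 1 + Eop (m + 1)
          - Sop (m + 1) * Dop 1 := by
      rw [U1_eq, mul_sub, ← mul_assoc, Dop_MopX, if_pos rfl, add_mul, one_mul,
        mul_assoc, Dop_Eop (m + 1) 1 h1E, Dop_Sop (m + 1) 1 le_rfl,
        if_neg (by simp [mem_Icc]), add_zero, mul_add]
    have c2 : Dop 1 * (μ • Mop (X 1)) =
        μ • (Mop (X 1) * Dop 1) + μ • (1 : Module.End ℂ WPoly) := by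
      rw [mul_smul_comm, Dop_MopX, if_pos rfl, smul_add]
    have c3 : (Eop (m + 1) + μ • (1 : Module.End ℂ WPoly)) *
          (U0op (m + 1) - lam • (1 : Module.End ℂ WPoly)) =
        U0op (m + 1) * Eop (m + 1) + μ • U0op (m + 1) - lam • Eop (m + 1)
          - (μ * lam) • (1 : Module.End ℂ WPoly) := by
      simp only [add_mul, mul_sub, sub_mul, smul_mul_assoc, mul_smul_comm, one_mul, mul_one,
        smul_smul, Eop_U0op_comm]
      module
    rw [mul_add, c1, c2, c3, sum_MT m μ]
    module
end
end
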